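/- Assume furthermore E⁰_0 = 1. Then for every λ ∈ X⁺: E^∞_λ = E¹_{λ⁰} · F(E¹_{λ¹}) · F²(E¹_{λ²}) ⋯, a product in which all but finitely many factors equal 1 (since λ^k = 0 for large k and E¹_0 = E⁰_0 = 1). -/

import Mathlib

/-!
Setting: `X⁺ = I → ℕ` (componentwise addition) for a finite index set `I`, `p ≥ 2`.
`digit p lam k` is the `k`-th base-`p` digit `λ^k` of `lam` (so `λ^k ∈ X⁺_red` and
`lam = ∑_k p^k • λ^k`); `shift p k lam = ∑_{j≥k} p^{j-k} λ^j`;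
`trunc p k lam = ∑_{0≤j≤k-1} p^j λ^j`.
-/

namespace LusztigChar

variable {I : Type*} [Fintype I] {R : Type*} [CommRing R]

/-- The `k`-th digit `λ^k` of `λ ∈ X⁺ = I → ℕ` in base `p`. -/
def digit (p : ℕ) (lam : I → ℕ) (k : ℕ) : I → ℕ := fun i => lam i / p ^ k % p

/-- `∑_{j≥k} p^{j-k} λ^j ∈ X⁺` (a sum with finitely many nonzero terms). -/
noncomputable def shift (p k : ℕ) (lam : I → ℕ) : I → ℕ :=
  ∑ᶠ j : ℕ, p ^ j • digit p lam (k + j)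

/-- `∑_{0≤j≤k-1} p^j λ^j ∈ X⁺`. -/
def trunc (p k : ℕ) (lam : I → ℕ) : I → ℕ :=
  ∑ j ∈ Finset.range k, p ^ j • digit p lam j

/-- The recursive family `E^k : X⁺ → R` built from `E⁰ = E0` and the integers
`p_{μ,λ} = P μ λ`:  `E^k_λ = ∑_μ p_{μ, ∑_{j≥k-1} p^{j-k+1} λ^j} · E^{k-1}_{∑_{0≤j≤k-2} p^j λ^j + p^{k-1} μ}`
for `k ≥ 1`. -/
noncomputable def E (p : ℕ) (P : (I → ℕ) → (I → ℕ) → ℤ) (E0 : (I → ℕ) → R) :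
    ℕ → (I → ℕ) → R
  | 0 => E0
  | k + 1 => fun lam =>
      ∑ᶠ mu : I → ℕ, P mu (shift p k lam) • E p P E0 k (trunc p k lam + p ^ k • mu)

open Function

private lemma pi_le_finite {I : Type*} [Fintype I] (B : ℕ) :
    {μ : I → ℕ | ∀ i, μ i ≤ B}.Finite := by
  have h : {μ : I → ℕ | ∀ i, μ i ≤ B} = Set.pi Set.univ (fun _ => Set.Iic B) := by
    ext μ; simp [Set.mem_pi, Set.mem_Iic, Pi.le_def]
  rw [h]; exact Set.Finite.pi fun _ => Set.finite_Iic B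

private lemma digit_sum_aux (p x n : ℕ) :
    ∑ j ∈ Finset.range n, p ^ j * (x / p ^ j % p) = x % p ^ n := by
  induction n with
  | zero => simp [Nat.mod_one]
  | succ n ih => rw [Finset.sum_range_succ, ih, pow_succ, Nat.mod_mul]

private lemma lt_pow_of_lt {p x n : ℕ} (hp : 2 ≤ p) (hx : x < n) : x < p ^ n :=
  (hx.trans (Nat.lt_two_pow_self)).trans_le (Nat.pow_le_pow_left hp n)

private lemma nat_aux1 {p h k : ℕ} (hp : 2 ≤ p) (hhk : h < k) (a m : ℕ) :
    (a + p ^ k * m) / p ^ h % p = a / p ^ h % p := by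
  have e1 : p ^ k = p ^ h * p ^ (k - h) := by rw [← pow_add]; congr 1; omega
  rw [e1, mul_assoc, Nat.add_mul_div_left _ _ (pow_pos (by omega) h)]
  have e2 : p ^ (k - h) = p * p ^ (k - h - 1) := by rw [← pow_succ']; congr 1; omega
  rw [e2, mul_assoc, Nat.add_mul_mod_self_left]

private lemma nat_aux2 {p h k : ℕ} (hp : 2 ≤ p) (hhk : h < k) (x : ℕ) :
    x % p ^ k / p ^ h % p = x / p ^ h % p := by
  conv_rhs => rw [← Nat.div_add_mod x (p ^ k), Nat.add_comm]
  rw [nat_aux1 hp hhk]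

lemma trunc_apply (p k : ℕ) (lam : I → ℕ) (i : I) : trunc p k lam i = lam i % p ^ k := by
  simp only [trunc, Finset.sum_apply, Pi.smul_apply, smul_eq_mul, digit]
  exact digit_sum_aux p (lam i) k

lemma digit_eq_zero {p : ℕ} (hp : 2 ≤ p) (lam : I → ℕ) {h : ℕ}
    (hh : Finset.univ.sup lam < h) : digit p lam h = 0 := by
  funext i
  have h1 : lam i < h := lt_of_le_of_lt (Finset.le_sup (Finset.mem_univ i)) hh
  have h2 : lam i < p ^ h := lt_pow_of_lt hp h1
  simp [digit, Nat.div_eq_of_lt h2]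

lemma shift_apply {p : ℕ} (hp : 2 ≤ p) (k : ℕ) (lam : I → ℕ) (i : I) :
    shift p k lam i = lam i / p ^ k := by
  classical
  have hbig : ∀ j, Finset.univ.sup lam + 1 ≤ j → digit p lam (k + j) = 0 := by
    intro j hj
    exact digit_eq_zero hp lam (by omega)
  set n := Finset.univ.sup lam + 1 with hn
  have hsupp : (support fun j => p ^ j • digit p lam (k + j)) ⊆ ↑(Finset.range n) := by
    intro j hj
    simp only [Finset.coe_range, Set.mem_Iio]
    by_contra hcon
    exact hj (by simp [hbig j (by omega)])
  have hfin : (support fun j => p ^ j • digit p lam (k + j)).Finite :=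
    Set.Finite.subset (Finset.range n).finite_toSet hsupp
  have := (Pi.evalAddMonoidHom (fun _ : I => ℕ) i).map_finsum hfin
  simp only [Pi.evalAddMonoidHom_apply] at this
  rw [shift, this]
  have hsupp2 : (support fun j => (p ^ j • digit p lam (k + j)) i) ⊆ ↑(Finset.range n) := by
    intro j hj
    simp only [Finset.coe_range, Set.mem_Iio]
    by_contra hcon
    exact hj (by simp [hbig j (by omega)])
  rw [finsum_eq_sum_of_support_subset _ hsupp2]
  have hterm : ∀ j, (p ^ j • digit p lam (k + j)) i = p ^ j * (lam i / p ^ k / p ^ j % p) := by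
    intro j
    simp only [Pi.smul_apply, smul_eq_mul, digit, Nat.div_div_eq_div_mul, ← pow_add]
  simp only [hterm, digit_sum_aux]
  exact Nat.mod_eq_of_lt (lt_pow_of_lt hp (by
    have : lam i / p ^ k ≤ lam i := Nat.div_le_self _ _
    have h2 : lam i ≤ Finset.univ.sup lam := Finset.le_sup (Finset.mem_univ i)
    omega))

lemma shift_zero {p : ℕ} (hp : 2 ≤ p) (lam : I → ℕ) : shift p 0 lam = lam :=
  funext fun i => by rw [shift_apply hp]; simp

lemma trunc_zero (p : ℕ) (lam : I → ℕ) : trunc p 0 lam = 0 := by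
  simp [trunc]

lemma digit_trunc_add {p h k : ℕ} (hp : 2 ≤ p) (hhk : h < k) (lam mu : I → ℕ) :
    digit p (trunc p k lam + p ^ k • mu) h = digit p lam h := by
  funext i
  simp only [digit, Pi.add_apply, Pi.smul_apply, smul_eq_mul, trunc_apply]
  rw [nat_aux1 hp hhk, nat_aux2 hp hhk]

lemma shift_succ_trunc {p : ℕ} (hp : 2 ≤ p) (k : ℕ) (lam mu : I → ℕ) :
    shift p k (trunc p (k + 1) lam + p ^ (k + 1) • mu) = digit p lam k + p • mu := by
  funext i
  rw [shift_apply hp]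
  simp only [Pi.add_apply, Pi.smul_apply, smul_eq_mul, trunc_apply, digit]
  have e : p ^ (k + 1) * mu i = p ^ k * (p * mu i) := by ring
  rw [e, Nat.add_mul_div_left _ _ (pow_pos (by omega) k), pow_succ,
    Nat.mod_mul_right_div_self]

lemma digit_lt {p : ℕ} (hp : 2 ≤ p) (lam : I → ℕ) (k : ℕ) (i : I) :
    digit p lam k i < p := Nat.mod_lt _ (by omega)

private lemma ringHom_map_finsum {ι : Type*} (g : R →+* R) {f : ι → R}
    (hf : (support f).Finite) : g (∑ᶠ i, f i) = ∑ᶠ i, g (f i) :=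
  g.toAddMonoidHom.map_finsum hf

lemma E_one_eq (p : ℕ) (hp : 2 ≤ p) (P : (I → ℕ) → (I → ℕ) → ℤ) (E0 : (I → ℕ) → R)
    (nu : I → ℕ) : E p P E0 1 nu = ∑ᶠ mu : I → ℕ, P mu nu • E0 mu := by
  have h0 : E p P E0 1 nu
      = ∑ᶠ mu : I → ℕ, P mu (shift p 0 nu) • E p P E0 0 (trunc p 0 nu + p ^ 0 • mu) := rfl
  rw [h0]
  apply finsum_congr
  intro mu
  rw [shift_zero hp, trunc_zero, pow_zero, one_smul, zero_add]
  rfl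


/-- paper 6(c): assuming `E⁰_0 = 1` and the Steinberg-type identity,
`E^∞_λ = E¹_{λ⁰} · F(E¹_{λ¹}) · F²(E¹_{λ²}) ⋯`, a product in which all but finitely many
factors equal `1`. -/
theorem Einf_eq_finprod_iterate {I : Type*} [Fintype I] {R : Type*} [CommRing R]
    (p : ℕ) (hp : 2 ≤ p)
    (le : (I → ℕ) → (I → ℕ) → Prop)
    (hle_refl : ∀ a, le a a)
    (hle_antisymm : ∀ a b, le a b → le b a → a = b)
    (hle_trans : ∀ a b c, le a b → le b c → le a c)
    (N : (I → ℕ) →+ ℕ)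
    (hN_zero : ∀ a, N a = 0 → a = 0)
    (hN_mono : ∀ a b, le a b → N a ≤ N b)
    (P : (I → ℕ) → (I → ℕ) → ℤ)
    (hP_le : ∀ mu lam, P mu lam ≠ 0 → le mu lam)
    (hP_diag : ∀ lam, P lam lam = 1)
    (E0 : (I → ℕ) → R) (hE00 : E0 0 = 1)
    (Einf : (I → ℕ) → R)
    (hEinf : ∀ lam, ∃ n : ℕ, ∀ k, n ≤ k → E p P E0 k lam = Einf lam)
    (F : R →+* R)
    (hSteinberg : ∀ lam : I → ℕ,
      E p P E0 1 lam = E p P E0 1 (digit p lam 0) * F (E0 (shift p 1 lam)))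
    (lam : I → ℕ) :
    (∃ n : ℕ, ∀ h, n ≤ h → (⇑F)^[h] (E p P E0 1 (digit p lam h)) = 1) ∧
    Einf lam = ∏ᶠ h : ℕ, (⇑F)^[h] (E p P E0 1 (digit p lam h)) := by
  classical
  -- finiteness of the support of `P · ν`
  have hPfin : ∀ nu : I → ℕ, {mu : I → ℕ | P mu nu ≠ 0}.Finite := by
    intro nu
    apply (pi_le_finite (N nu)).subset
    intro mu hmu i
    have h1 : N mu ≤ N nu := hN_mono _ _ (hP_le mu nu hmu)
    have hone : 1 ≤ N ((Pi.single i 1 : I → ℕ)) := by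
      rcases Nat.eq_zero_or_pos (N ((Pi.single i 1 : I → ℕ))) with h | h
      · exfalso
        have h0 := congrFun (hN_zero _ h) i
        simp at h0
      · exact h
    have hdec : mu = (Pi.single i (mu i) : I → ℕ) + Function.update mu i 0 := by
      funext j
      rcases eq_or_ne j i with rfl | hj
      · simp
      · simp [Pi.single_eq_of_ne hj, Function.update_of_ne hj]
    have hsingle : N ((Pi.single i (mu i) : I → ℕ)) = mu i * N ((Pi.single i 1 : I → ℕ)) := by
      have hs : (Pi.single i (mu i) : I → ℕ) = mu i • (Pi.single i 1 : I → ℕ) := by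
        funext j
        rcases eq_or_ne j i with rfl | hj
        · simp
        · simp [Pi.single_eq_of_ne hj]
      rw [hs, map_nsmul, smul_eq_mul]
    have h2 : mu i ≤ N mu := by
      calc mu i ≤ mu i * N ((Pi.single i 1 : I → ℕ)) := Nat.le_mul_of_pos_right _ hone
        _ = N ((Pi.single i (mu i) : I → ℕ)) := hsingle.symm
        _ ≤ N mu := by
            conv_rhs => rw [hdec]
            rw [map_add]
            exact Nat.le_add_right _ _
    exact h2.trans h1
  have hsub : ∀ (nu : I → ℕ) (g : (I → ℕ) → R),
      (support fun mu => P mu nu • g mu) ⊆ {mu : I → ℕ | P mu nu ≠ 0} := by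
    intro nu g mu hmu
    simp only [Set.mem_setOf_eq]
    intro h0
    exact hmu (by simp [h0])
  have hfin : ∀ (nu : I → ℕ) (g : (I → ℕ) → R),
      (support fun mu => P mu nu • g mu).Finite :=
    fun nu g => (hPfin nu).subset (hsub nu g)
  -- E¹ at 0
  have hE1zero : E p P E0 1 0 = 1 := by
    rw [E_one_eq p hp]
    rw [finsum_eq_single _ 0 (by
      intro x hx
      have hP0 : P x 0 = 0 := by
        by_contra hP
        exact hx (hN_zero x (Nat.le_zero.mp ((hN_mono x 0 (hP_le x 0 hP)).trans_eq
          (map_zero N))))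
      rw [hP0, zero_smul])]
    rw [hP_diag, hE00, one_smul]
  -- the derived Steinberg identity for reduced weights
  have hstein : ∀ d mu : I → ℕ, (∀ i, d i < p) →
      E p P E0 1 (d + p • mu) = E p P E0 1 d * F (E0 mu) := by
    intro d mu hd
    have h0 : digit p (d + p • mu) 0 = d := by
      funext i
      simp only [digit, pow_zero, Nat.div_one, Pi.add_apply, Pi.smul_apply, smul_eq_mul]
      rw [Nat.add_mul_mod_self_left, Nat.mod_eq_of_lt (hd i)]
    have h1 : shift p 1 (d + p • mu) = mu := by
      funext i
      rw [shift_apply hp]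
      simp only [pow_one, Pi.add_apply, Pi.smul_apply, smul_eq_mul]
      rw [Nat.add_mul_div_left _ _ (by omega), Nat.div_eq_of_lt (hd i), zero_add]
    rw [hSteinberg (d + p • mu), h0, h1]
  -- the key inductive formula
  have key : ∀ (k : ℕ) (lam' : I → ℕ), E p P E0 (k + 1) lam' =
      (∏ h ∈ Finset.range k, (F ^ h) (E p P E0 1 (digit p lam' h))) *
        (F ^ k) (E p P E0 1 (shift p k lam')) := by
    intro k
    induction k with
    | zero =>
      intro lam'
      rw [shift_zero hp, Finset.prod_range_zero, one_mul, pow_zero]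
      rfl
    | succ k ih =>
      intro lam'
      have hEeq : E p P E0 (k + 1 + 1) lam' = ∑ᶠ mu : I → ℕ,
          P mu (shift p (k + 1) lam') •
            E p P E0 (k + 1) (trunc p (k + 1) lam' + p ^ (k + 1) • mu) := rfl
      rw [hEeq]
      have hterm : ∀ mu : I → ℕ,
          P mu (shift p (k + 1) lam') •
              E p P E0 (k + 1) (trunc p (k + 1) lam' + p ^ (k + 1) • mu)
            = ((∏ h ∈ Finset.range k, (F ^ h) (E p P E0 1 (digit p lam' h))) *
                (F ^ k) (E p P E0 1 (digit p lam' k))) *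
              (P mu (shift p (k + 1) lam') • (F ^ (k + 1)) (E0 mu)) := by
        intro mu
        rw [ih]
        have hprod : ∏ h ∈ Finset.range k,
            (F ^ h) (E p P E0 1 (digit p (trunc p (k + 1) lam' + p ^ (k + 1) • mu) h))
            = ∏ h ∈ Finset.range k, (F ^ h) (E p P E0 1 (digit p lam' h)) :=
          Finset.prod_congr rfl fun h hh => by
            rw [digit_trunc_add hp (by have := Finset.mem_range.mp hh; omega)]
        rw [hprod, shift_succ_trunc hp,
          hstein (digit p lam' k) mu (digit_lt hp lam' k), map_mul]
        have hFk : (F ^ k) (F (E0 mu)) = (F ^ (k + 1)) (E0 mu) := by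
          rw [pow_succ]; rfl
        rw [hFk, mul_smul_comm, ← mul_assoc]
      rw [finsum_congr hterm]
      set D := (∏ h ∈ Finset.range k, (F ^ h) (E p P E0 1 (digit p lam' h))) *
        (F ^ k) (E p P E0 1 (digit p lam' k)) with hD
      rw [← mul_finsum' _ D (hfin _ _)]
      have hmap : (∑ᶠ mu : I → ℕ, P mu (shift p (k + 1) lam') • (F ^ (k + 1)) (E0 mu))
          = (F ^ (k + 1)) (E p P E0 1 (shift p (k + 1) lam')) := by
        rw [E_one_eq p hp, ringHom_map_finsum _ (hfin _ _)]
        exact finsum_congr fun mu => (map_zsmul (F ^ (k + 1)) _ _).symm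
      rw [hmap, hD, Finset.prod_range_succ]
  -- large digits vanish
  have hdig0 : ∀ h : ℕ, Finset.univ.sup lam + 1 ≤ h → digit p lam h = 0 := by
    intro h hh
    exact digit_eq_zero hp lam (by omega)
  have hfactor1 : ∀ h : ℕ, Finset.univ.sup lam + 1 ≤ h →
      (⇑F)^[h] (E p P E0 1 (digit p lam h)) = 1 := by
    intro h hh
    rw [hdig0 h hh, hE1zero]
    exact iterate_map_one _ _
  constructor
  · exact ⟨Finset.univ.sup lam + 1, hfactor1⟩
  · obtain ⟨n0, hn0⟩ := hEinf lam
    set k := max n0 (Finset.univ.sup lam + 1) with hk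
    have h1 : Einf lam = E p P E0 (k + 1) lam := (hn0 (k + 1) (by omega)).symm
    have hsh : shift p k lam = 0 := by
      funext i
      rw [shift_apply hp]
      have hlt : lam i < p ^ k := lt_pow_of_lt hp (by
        have := Finset.le_sup (f := lam) (Finset.mem_univ i)
        omega)
      simp [Nat.div_eq_of_lt hlt]
    rw [h1, key k lam, hsh, hE1zero, map_one, mul_one]
    rw [finprod_eq_prod_of_mulSupport_subset _ (s := Finset.range k) (by
      intro h hh
      simp only [Finset.coe_range, Set.mem_Iio]
      by_contra hcon
      exact hh (hfactor1 h (by omega)))]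
    exact Finset.prod_congr rfl fun h _ => by rw [RingHom.coe_pow]

end LusztigChar
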